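/- Sewing Lemma (existence and regularity): Let E be a real Banach space, T > 0, and exponents 0 < α ≤ 1 < β. Let A : Δ₂ → E satisfy A_{t,t} = 0 for all t ∈ [0,T], ‖A‖_α < ∞ and ‖δA‖_β < ∞. Then there exists a constant c > 0 depending only on β, and a function 𝒜 : [0,T] → E with 𝒜(0) = 0, such that for all 0 ≤ s ≤ t ≤ T one has ‖(𝒜(t) − 𝒜(s)) − A_{s,t}‖_E ≤ c ‖δA‖_β (t−s)^β; consequently ‖𝒜(t) − 𝒜(s)‖_E ≤ (‖A‖_α + c ‖δA‖_β T^{β−α}) (t−s)^α for all 0 ≤ s ≤ t ≤ T, i.e. 𝒜 is α-Hölder continuous on [0,T]. -/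

import Mathlib

open Finset Filter Topology

namespace Sewing

noncomputable def clamp (s t x : ℝ) : ℝ := min t (max s x)

lemma le_clamp {s t : ℝ} (hst : s ≤ t) (x : ℝ) : s ≤ clamp s t x :=
  le_min hst (le_max_left _ _)

lemma clamp_le {s t : ℝ} (x : ℝ) : clamp s t x ≤ t := min_le_left _ _

lemma clamp_mono {s t : ℝ} {x y : ℝ} (h : x ≤ y) : clamp s t x ≤ clamp s t y :=
  min_le_min le_rfl (max_le_max le_rfl h)

lemma clamp_sub_le {s t x y : ℝ} (h : x ≤ y) :
    clamp s t y - clamp s t x ≤ y - x := by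
  have h1 : max s y ≤ max s x + (y - x) := by
    apply max_le
    · linarith [le_max_left s x]
    · linarith [le_max_right s x]
  have h2 : clamp s t y ≤ min t (max s x + (y - x)) := min_le_min le_rfl h1
  have h3 : min t (max s x + (y - x)) ≤ min (t + (y - x)) (max s x + (y - x)) :=
    min_le_min (by linarith) le_rfl
  have h4 : min (t + (y - x)) (max s x + (y - x)) = min t (max s x) + (y - x) :=
    min_add_add_right t (max s x) (y - x)
  have h5 : clamp s t x = min t (max s x) := rfl
  linarith [h2.trans h3]

lemma clamp_of_le {s t x : ℝ} (hst : s ≤ t) (h : x ≤ s) : clamp s t x = s := by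
  rw [clamp, max_eq_left h, min_eq_right hst]

lemma clamp_of_ge {s t x : ℝ} (hst : s ≤ t) (h : t ≤ x) : clamp s t x = t := by
  rw [clamp, max_eq_right (hst.trans h), min_eq_left h]

noncomputable def pt (T : ℝ) (n k : ℕ) : ℝ := k * T / 2 ^ n

lemma pt_nonneg {T : ℝ} (hT : 0 ≤ T) (n k : ℕ) : 0 ≤ pt T n k := by
  unfold pt; positivity

lemma pt_mono {T : ℝ} (hT : 0 ≤ T) (n : ℕ) {k l : ℕ} (h : k ≤ l) : pt T n k ≤ pt T n l := by
  unfold pt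
  have h' : (k : ℝ) ≤ l := by exact_mod_cast h
  gcongr

lemma pt_succ_sub (T : ℝ) (n k : ℕ) : pt T n (k + 1) - pt T n k = T / 2 ^ n := by
  unfold pt
  push_cast
  ring

lemma pt_zero (T : ℝ) (n : ℕ) : pt T n 0 = 0 := by simp [pt]

lemma pt_last (T : ℝ) (n : ℕ) : pt T n (2 ^ n) = T := by
  unfold pt
  push_cast
  field_simp

lemma pt_double (T : ℝ) (n k : ℕ) : pt T (n + 1) (2 * k) = pt T n k := by
  unfold pt
  push_cast
  field_simp
  ring

lemma sum_range_two_mul {M : Type*} [AddCommMonoid M] (f : ℕ → M) (m : ℕ) :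
    ∑ k ∈ Finset.range (2 * m), f k = ∑ k ∈ Finset.range m, (f (2 * k) + f (2 * k + 1)) := by
  induction m with
  | zero => simp
  | succ m ih =>
      have : 2 * (m + 1) = (2 * m + 1) + 1 := by ring
      rw [this, Finset.sum_range_succ, Finset.sum_range_succ, ih, Finset.sum_range_succ]
      abel



-- rpow helper: (T / 2^n) ^ γ = T ^ γ * ((2:ℝ)^(-γ))^n
lemma div_pow_rpow {T : ℝ} (hT : 0 < T) (γ : ℝ) (n : ℕ) :
    (T / 2 ^ n) ^ γ = T ^ γ * ((2 : ℝ) ^ (-γ)) ^ n := by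
  rw [Real.div_rpow hT.le (by positivity)]
  rw [← Real.rpow_natCast ((2:ℝ) ^ (-γ)) n, ← Real.rpow_natCast (2:ℝ) n]
  rw [← Real.rpow_mul (by norm_num : (0:ℝ) ≤ 2), ← Real.rpow_mul (by norm_num : (0:ℝ) ≤ 2)]
  rw [div_eq_mul_inv, ← Real.rpow_neg (by norm_num : (0:ℝ) ≤ 2)]
  ring_nf

-- x ^ β ≤ g ^ (β-1) * x for 0 ≤ x ≤ g, 1 < β
lemma rpow_le_mul {x g β : ℝ} (hβ : 1 < β) (hx : 0 ≤ x) (hg : x ≤ g) :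
    x ^ β ≤ g ^ (β - 1) * x := by
  rcases eq_or_lt_of_le hx with h | h
  · rw [← h, Real.zero_rpow (by linarith), mul_zero]
  · have hx1 : x ^ β = x ^ (β - 1) * x := by
      have : β = (β - 1) + 1 := by ring
      rw [this, Real.rpow_add h, Real.rpow_one]
      ring_nf
    rw [hx1]
    have : x ^ (β - 1) ≤ g ^ (β - 1) := Real.rpow_le_rpow hx hg (by linarith)
    exact mul_le_mul_of_nonneg_right this h.le


variable {E : Type*} [NormedAddCommGroup E]

noncomputable def S (A : ℝ → ℝ → E) (T s t : ℝ) (n : ℕ) : E :=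
  ∑ k ∈ Finset.range (2 ^ n), A (clamp s t (pt T n k)) (clamp s t (pt T n (k + 1)))

lemma S_self (A : ℝ → ℝ → E) (T s : ℝ) (hAss : A s s = 0) (n : ℕ) :
    S A T s s n = 0 := by
  unfold S
  have hc : ∀ x : ℝ, clamp s s x = s := fun x => by
    rw [clamp, min_eq_left (le_max_left _ _)]
  simp [hc, hAss]

lemma norm_S_succ_sub (A : ℝ → ℝ → E) {T s t Cδ β : ℝ} (hβ : 1 < β) (hT : 0 < T) (hCδ : 0 ≤ Cδ)
    (hs : 0 ≤ s) (hst : s ≤ t) (htT : t ≤ T)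
    (hδ : ∀ p u q : ℝ, 0 ≤ p → p ≤ u → u ≤ q → q ≤ T →
      ‖A p q - A p u - A u q‖ ≤ Cδ * (q - p) ^ β)
    (n : ℕ) :
    ‖S A T s t (n + 1) - S A T s t n‖ ≤ Cδ * (T / 2 ^ n) ^ (β - 1) * (t - s) := by
  set d : ℕ → ℝ := fun k => clamp s t (pt T n k) with hd
  set e : ℕ → ℝ := fun k => clamp s t (pt T (n + 1) (2 * k + 1)) with he
  have hpair : S A T s t (n + 1)
      = ∑ k ∈ Finset.range (2 ^ n), (A (d k) (e k) + A (e k) (d (k + 1))) := by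
    unfold S
    have h2 : 2 ^ (n + 1) = 2 * 2 ^ n := by ring
    rw [h2, sum_range_two_mul]
    refine Finset.sum_congr rfl fun k _ => ?_
    have e1 : pt T (n + 1) (2 * k) = pt T n k := pt_double T n k
    have e2 : pt T (n + 1) (2 * k + 1 + 1) = pt T n (k + 1) := by
      have : 2 * k + 1 + 1 = 2 * (k + 1) := by ring
      rw [this, pt_double]
    rw [e1, e2]
  have hdiff : S A T s t (n + 1) - S A T s t n
      = ∑ k ∈ Finset.range (2 ^ n),
          (A (d k) (e k) + A (e k) (d (k + 1)) - A (d k) (d (k + 1))) := by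
    rw [hpair, S, ← Finset.sum_sub_distrib]
  rw [hdiff]
  have hterm : ∀ k ∈ Finset.range (2 ^ n),
      ‖A (d k) (e k) + A (e k) (d (k + 1)) - A (d k) (d (k + 1))‖
        ≤ Cδ * ((T / 2 ^ n) ^ (β - 1) * (d (k + 1) - d k)) := by
    intro k hk
    have hk2 : k + 1 ≤ 2 ^ n := Finset.mem_range.mp hk
    have hpt1 : pt T n k ≤ pt T (n + 1) (2 * k + 1) := by
      rw [← pt_double T n k]; exact pt_mono hT.le _ (by omega)
    have hpt2 : pt T (n + 1) (2 * k + 1) ≤ pt T n (k + 1) := by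
      rw [← pt_double T n (k + 1)]; exact pt_mono hT.le _ (by omega)
    have hde1 : d k ≤ e k := clamp_mono hpt1
    have hde2 : e k ≤ d (k + 1) := clamp_mono hpt2
    have hd0 : 0 ≤ d k := hs.trans (le_clamp hst _)
    have hdT : d (k + 1) ≤ T := (clamp_le _).trans htT
    have hgap : d (k + 1) - d k ≤ T / 2 ^ n := by
      have := clamp_sub_le (s := s) (t := t) (pt_mono hT.le n (Nat.le_succ k))
      have h2 := pt_succ_sub T n k
      simp only [hd]
      linarith
    have hneg : A (d k) (e k) + A (e k) (d (k + 1)) - A (d k) (d (k + 1))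
        = -(A (d k) (d (k + 1)) - A (d k) (e k) - A (e k) (d (k + 1))) := by abel
    rw [hneg, norm_neg]
    have h1 := hδ (d k) (e k) (d (k + 1)) hd0 hde1 hde2 hdT
    have h2 : (d (k + 1) - d k) ^ β ≤ (T / 2 ^ n) ^ (β - 1) * (d (k + 1) - d k) :=
      rpow_le_mul hβ (by linarith) hgap
    calc ‖A (d k) (d (k + 1)) - A (d k) (e k) - A (e k) (d (k + 1))‖
        ≤ Cδ * (d (k + 1) - d k) ^ β := h1
      _ ≤ Cδ * ((T / 2 ^ n) ^ (β - 1) * (d (k + 1) - d k)) := by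
          exact mul_le_mul_of_nonneg_left h2 hCδ
  calc ‖∑ k ∈ Finset.range (2 ^ n),
          (A (d k) (e k) + A (e k) (d (k + 1)) - A (d k) (d (k + 1)))‖
      ≤ ∑ k ∈ Finset.range (2 ^ n),
          ‖A (d k) (e k) + A (e k) (d (k + 1)) - A (d k) (d (k + 1))‖ :=
        norm_sum_le _ _
    _ ≤ ∑ k ∈ Finset.range (2 ^ n), Cδ * ((T / 2 ^ n) ^ (β - 1) * (d (k + 1) - d k)) :=
        Finset.sum_le_sum hterm
    _ = Cδ * (T / 2 ^ n) ^ (β - 1) * ∑ k ∈ Finset.range (2 ^ n), (d (k + 1) - d k) := by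
        rw [Finset.mul_sum]; refine Finset.sum_congr rfl fun k _ => by ring
    _ = Cδ * (T / 2 ^ n) ^ (β - 1) * (t - s) := by
        rw [Finset.sum_range_sub d]
        congr 2
        · show clamp s t (pt T n (2 ^ n)) = t
          rw [pt_last]; exact clamp_of_ge hst htT
        · show clamp s t (pt T n 0) = s
          rw [pt_zero]; exact clamp_of_le hst hs


lemma norm_S_sub_A (A : ℝ → ℝ → E) {T s t Cδ β : ℝ} (hβ : 1 < β) (hT : 0 < T)
    (hCδ : 0 ≤ Cδ) (hs : 0 ≤ s) (hst : s ≤ t) (htT : t ≤ T)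
    (hdiag : ∀ x ∈ Set.Icc (0 : ℝ) T, A x x = 0)
    (hδ : ∀ p u q : ℝ, 0 ≤ p → p ≤ u → u ≤ q → q ≤ T →
      ‖A p q - A p u - A u q‖ ≤ Cδ * (q - p) ^ β)
    (m : ℕ) (h2m : t - s < 2 * (T / 2 ^ m)) :
    ‖S A T s t m - A s t‖ ≤ 2 * Cδ * (t - s) ^ β := by
  set c : ℕ → ℝ := fun k => clamp s t (pt T m k) with hc
  set u : ℕ → E := fun k => A s (c (k + 1)) - A s (c k) - A (c k) (c (k + 1)) with hu
  have hAss : A s s = 0 := hdiag s ⟨hs, hst.trans htT⟩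
  have hAtt : A t t = 0 := hdiag t ⟨hs.trans hst, htT⟩
  have hcK : c (2 ^ m) = t := by
    show clamp s t (pt T m (2 ^ m)) = t
    rw [pt_last]; exact clamp_of_ge hst htT
  have hc0 : c 0 = s := by
    show clamp s t (pt T m 0) = s
    rw [pt_zero]; exact clamp_of_le hst hs
  have hsum : ∑ k ∈ Finset.range (2 ^ m), u k = A s t - S A T s t m := by
    have h1 : ∑ k ∈ Finset.range (2 ^ m), (A s (c (k + 1)) - A s (c k))
        = A s (c (2 ^ m)) - A s (c 0) := Finset.sum_range_sub (fun k => A s (c k)) (2 ^ m)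
    have : ∑ k ∈ Finset.range (2 ^ m), u k
        = ∑ k ∈ Finset.range (2 ^ m), (A s (c (k + 1)) - A s (c k))
          - ∑ k ∈ Finset.range (2 ^ m), A (c k) (c (k + 1)) := by
      rw [← Finset.sum_sub_distrib]
    rw [this, h1, hcK, hc0, hAss]
    show A s t - 0 - S A T s t m = A s t - S A T s t m
    abel
  have hid : S A T s t m - A s t = -∑ k ∈ Finset.range (2 ^ m), u k := by
    rw [hsum]; abel
  rw [hid, norm_neg]
  set M : ℝ := Cδ * (t - s) ^ β with hM
  have hM0 : 0 ≤ M := mul_nonneg hCδ (Real.rpow_nonneg (by linarith) _)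
  set j : ℕ := Nat.floor (s * 2 ^ m / T) with hj
  have hx0 : 0 ≤ s * 2 ^ m / T := by positivity
  have hpow : (0:ℝ) < 2 ^ m := by positivity
  have hterm : ∀ k ∈ Finset.range (2 ^ m),
      ‖u k‖ ≤ (if k = j + 1 then M else 0) + (if k = j + 2 then M else 0) := by
    intro k hk
    have hck0 : s ≤ c k := le_clamp hst _
    have hck1 : c k ≤ c (k + 1) := clamp_mono (pt_mono hT.le m (Nat.le_succ k))
    have hckt : c (k + 1) ≤ t := clamp_le _
    have hMk : ‖u k‖ ≤ M := by
      have h1 := hδ s (c k) (c (k + 1)) hs hck0 hck1 (hckt.trans htT)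
      have h2 : (c (k + 1) - s) ^ β ≤ (t - s) ^ β :=
        Real.rpow_le_rpow (by linarith) (by linarith) (by linarith)
      calc ‖u k‖ ≤ Cδ * (c (k + 1) - s) ^ β := h1
        _ ≤ M := mul_le_mul_of_nonneg_left h2 hCδ
    by_cases hk1 : k = j + 1
    · simp only [hk1, if_pos rfl]
      have : ¬ (j + 1 = j + 2) := by omega
      rw [if_neg this, add_zero]
      exact hk1 ▸ hMk
    by_cases hk2 : k = j + 2
    · rw [if_neg hk1, if_pos hk2, zero_add]
      exact hk2 ▸ hMk
    rw [if_neg hk1, if_neg hk2, add_zero]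
    have hcase : k ≤ j ∨ j + 3 ≤ k := by omega
    rcases hcase with hle | hge
    · -- pt T m k ≤ s, so c k = s
      have h1 : (k : ℝ) ≤ s * 2 ^ m / T := by
        calc (k : ℝ) ≤ (j : ℝ) := by exact_mod_cast hle
          _ ≤ s * 2 ^ m / T := Nat.floor_le hx0
      have h2 : pt T m k ≤ s := by
        unfold pt
        rw [div_le_iff₀ hpow]
        calc (k : ℝ) * T ≤ (s * 2 ^ m / T) * T := by
              exact mul_le_mul_of_nonneg_right h1 hT.le
          _ = s * 2 ^ m := by field_simp
      have hcks : c k = s := clamp_of_le hst h2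
      have : u k = -(A s s) := by
        show A s (c (k + 1)) - A s (c k) - A (c k) (c (k + 1)) = -(A s s)
        rw [hcks, hAss]; abel
      rw [this, hAss, norm_neg, norm_zero]
    · -- t ≤ pt T m k, so c k = c (k+1) = t
      have hfl : s * 2 ^ m / T < (j : ℝ) + 1 := Nat.lt_floor_add_one _
      have h3 : t * 2 ^ m / T < (k : ℝ) := by
        have hts : (t - s) * 2 ^ m / T < 2 := by
          rw [div_lt_iff₀ hT]
          calc (t - s) * 2 ^ m < (2 * (T / 2 ^ m)) * 2 ^ m := by
                exact mul_lt_mul_of_pos_right h2m hpow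
            _ = 2 * T := by field_simp
        have hkk : (j : ℝ) + 3 ≤ (k : ℝ) := by exact_mod_cast hge
        have : t * 2 ^ m / T = s * 2 ^ m / T + (t - s) * 2 ^ m / T := by ring
        linarith
      have h4 : t ≤ pt T m k := by
        unfold pt
        rw [le_div_iff₀ hpow]
        calc t * 2 ^ m = (t * 2 ^ m / T) * T := by field_simp
          _ ≤ (k : ℝ) * T := mul_le_mul_of_nonneg_right h3.le hT.le
      have hck : c k = t := clamp_of_ge hst h4
      have hck1' : c (k + 1) = t :=
        clamp_of_ge hst (h4.trans (pt_mono hT.le m (Nat.le_succ k)))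
      have : u k = -(A t t) := by
        show A s (c (k + 1)) - A s (c k) - A (c k) (c (k + 1)) = -(A t t)
        rw [hck, hck1']; abel
      rw [this, hAtt, norm_neg, norm_zero]
  calc ‖∑ k ∈ Finset.range (2 ^ m), u k‖
      ≤ ∑ k ∈ Finset.range (2 ^ m), ‖u k‖ := norm_sum_le _ _
    _ ≤ ∑ k ∈ Finset.range (2 ^ m),
          ((if k = j + 1 then M else 0) + (if k = j + 2 then M else 0)) :=
        Finset.sum_le_sum hterm
    _ = (∑ k ∈ Finset.range (2 ^ m), (if k = j + 1 then M else 0))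
        + ∑ k ∈ Finset.range (2 ^ m), (if k = j + 2 then M else 0) :=
        Finset.sum_add_distrib
    _ ≤ M + M := by
        have e1 : ∀ b : ℕ, (∑ k ∈ Finset.range (2 ^ m), (if k = b then M else 0)) ≤ M := by
          intro b
          rw [Finset.sum_ite_eq' (Finset.range (2 ^ m)) b (fun _ => M)]
          split_ifs <;> linarith
        exact add_le_add (e1 (j + 1)) (e1 (j + 2))
    _ = 2 * Cδ * (t - s) ^ β := by rw [hM]; ring

lemma norm_S_cross (A : ℝ → ℝ → E) {T s t Cδ β : ℝ} (hβ : 1 < β) (hT : 0 < T)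
    (hCδ : 0 ≤ Cδ) (hs : 0 ≤ s) (hst : s ≤ t) (htT : t ≤ T)
    (hdiag : ∀ x ∈ Set.Icc (0 : ℝ) T, A x x = 0)
    (hδ : ∀ p u q : ℝ, 0 ≤ p → p ≤ u → u ≤ q → q ≤ T →
      ‖A p q - A p u - A u q‖ ≤ Cδ * (q - p) ^ β)
    (n : ℕ) :
    ‖S A T 0 t n - S A T 0 s n - S A T s t n‖ ≤ (2 ^ n : ℝ) * (Cδ * (T / 2 ^ n) ^ β) := by
  have hAss : A s s = 0 := hdiag s ⟨hs, hst.trans htT⟩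
  have h0t : (0:ℝ) ≤ t := hs.trans hst
  have hdiff : S A T 0 t n - S A T 0 s n - S A T s t n
      = ∑ k ∈ Finset.range (2 ^ n),
          (A (clamp 0 t (pt T n k)) (clamp 0 t (pt T n (k + 1)))
           - A (clamp 0 s (pt T n k)) (clamp 0 s (pt T n (k + 1)))
           - A (clamp s t (pt T n k)) (clamp s t (pt T n (k + 1)))) := by
    unfold S
    rw [← Finset.sum_sub_distrib, ← Finset.sum_sub_distrib]
  rw [hdiff]
  have hterm : ∀ k ∈ Finset.range (2 ^ n),
      ‖A (clamp 0 t (pt T n k)) (clamp 0 t (pt T n (k + 1)))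
           - A (clamp 0 s (pt T n k)) (clamp 0 s (pt T n (k + 1)))
           - A (clamp s t (pt T n k)) (clamp s t (pt T n (k + 1)))‖
        ≤ Cδ * (T / 2 ^ n) ^ β := by
    intro k hk
    have hk2 : k + 1 ≤ 2 ^ n := Finset.mem_range.mp hk
    set p : ℝ := pt T n k with hp
    set q : ℝ := pt T n (k + 1) with hq
    have hp0 : 0 ≤ p := pt_nonneg hT.le n k
    have hq0 : 0 ≤ q := pt_nonneg hT.le n (k + 1)
    have hpq : p ≤ q := pt_mono hT.le n (Nat.le_succ k)
    have hqT : q ≤ T := by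
      have := pt_mono hT.le n hk2
      rw [pt_last] at this
      exact this
    have hqp : q - p = T / 2 ^ n := pt_succ_sub T n k
    have hMpos : 0 ≤ Cδ * (T / 2 ^ n) ^ β := by positivity
    have e0t : ∀ x : ℝ, 0 ≤ x → clamp 0 t x = min t x := fun x hx => by
      rw [clamp, max_eq_right hx]
    have e0s : ∀ x : ℝ, 0 ≤ x → clamp 0 s x = min s x := fun x hx => by
      rw [clamp, max_eq_right hx]
    rcases le_or_gt s p with h | h
    · -- s ≤ p
      have c1 : clamp 0 s p = s := by rw [e0s p hp0, min_eq_left h]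
      have c2 : clamp 0 s q = s := by rw [e0s q hq0, min_eq_left (h.trans hpq)]
      have c3 : clamp s t p = clamp 0 t p := by
        rw [e0t p hp0, clamp, max_eq_right h]
      have c4 : clamp s t q = clamp 0 t q := by
        rw [e0t q hq0, clamp, max_eq_right (h.trans hpq)]
      rw [c1, c2, c3, c4]
      have : A (clamp 0 t p) (clamp 0 t q) - A s s - A (clamp 0 t p) (clamp 0 t q)
          = -(A s s) := by abel
      rw [this, hAss, norm_neg, norm_zero]
      exact hMpos
    rcases le_or_gt q s with h' | h'
    · -- q ≤ s
      have hpt : p ≤ t := (hpq.trans h').trans hst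
      have c1 : clamp 0 t p = p := by rw [e0t p hp0, min_eq_right hpt]
      have c2 : clamp 0 t q = q := by rw [e0t q hq0, min_eq_right (h'.trans hst)]
      have c3 : clamp 0 s p = p := by rw [e0s p hp0, min_eq_right (hpq.trans h')]
      have c4 : clamp 0 s q = q := by rw [e0s q hq0, min_eq_right h']
      have c5 : clamp s t p = s := clamp_of_le hst (hpq.trans h')
      have c6 : clamp s t q = s := clamp_of_le hst h'
      rw [c1, c2, c3, c4, c5, c6]
      have : A p q - A p q - A s s = -(A s s) := by abel
      rw [this, hAss, norm_neg, norm_zero]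
      exact hMpos
    · -- p < s < q
      have c1 : clamp 0 t p = p := by
        rw [e0t p hp0, min_eq_right (h.le.trans hst)]
      have c2 : clamp 0 t q = min t q := e0t q hq0
      have c3 : clamp 0 s p = p := by rw [e0s p hp0, min_eq_right h.le]
      have c4 : clamp 0 s q = s := by rw [e0s q hq0, min_eq_left h'.le]
      have c5 : clamp s t p = s := clamp_of_le hst h.le
      have c6 : clamp s t q = min t q := by
        rw [clamp, max_eq_right h'.le]
      rw [c1, c2, c3, c4, c5, c6]
      have hsmin : s ≤ min t q := le_min hst h'.le
      have hminT : min t q ≤ T := (min_le_left t q).trans htT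
      have h1 := hδ p s (min t q) hp0 h.le hsmin hminT
      have h2 : (min t q - p) ^ β ≤ (T / 2 ^ n) ^ β := by
        rw [← hqp]
        exact Real.rpow_le_rpow (by linarith) (by linarith [min_le_right t q]) (by linarith)
      calc ‖A p (min t q) - A p s - A s (min t q)‖ ≤ Cδ * (min t q - p) ^ β := h1
        _ ≤ Cδ * (T / 2 ^ n) ^ β := mul_le_mul_of_nonneg_left h2 hCδ
  calc ‖∑ k ∈ Finset.range (2 ^ n), _‖
      ≤ ∑ k ∈ Finset.range (2 ^ n), ‖_‖ := norm_sum_le _ _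
    _ ≤ ∑ _k ∈ Finset.range (2 ^ n), (Cδ * (T / 2 ^ n) ^ β) := Finset.sum_le_sum hterm
    _ = (2 ^ n : ℝ) * (Cδ * (T / 2 ^ n) ^ β) := by
        rw [Finset.sum_const, Finset.card_range, nsmul_eq_mul]
        push_cast
        ring

end Sewing


/-- Sewing Lemma (existence and regularity): for `0 < α ≤ 1 < β` there is a constant
`c > 0` depending only on `β` such that for every Banach space `E`, every `T > 0` and
every germ `A : Δ₂ → E` vanishing on the diagonal with `‖A‖_α ≤ Cα` and `‖δA‖_β ≤ Cδ`,
there is `𝒜 : [0,T] → E` with `𝒜(0) = 0`,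
`‖𝒜(t) − 𝒜(s) − A_{s,t}‖ ≤ c Cδ (t−s)^β` and consequently
`‖𝒜(t) − 𝒜(s)‖ ≤ (Cα + c Cδ T^{β−α}) (t−s)^α` for all `0 ≤ s ≤ t ≤ T`. -/
theorem sewing_lemma (β : ℝ) (hβ : 1 < β) :
    ∃ c : ℝ, 0 < c ∧
      ∀ (E : Type*) [NormedAddCommGroup E] [NormedSpace ℝ E] [CompleteSpace E]
        (T α : ℝ), 0 < T → 0 < α → α ≤ 1 →
        ∀ (A : ℝ → ℝ → E) (Cα Cδ : ℝ),
        (∀ t ∈ Set.Icc (0 : ℝ) T, A t t = 0) →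
        (∀ s t : ℝ, 0 ≤ s → s ≤ t → t ≤ T → ‖A s t‖ ≤ Cα * (t - s) ^ α) →
        (∀ s u t : ℝ, 0 ≤ s → s ≤ u → u ≤ t → t ≤ T →
          ‖A s t - A s u - A u t‖ ≤ Cδ * (t - s) ^ β) →
        ∃ 𝒜 : ℝ → E, 𝒜 0 = 0 ∧
          (∀ s t : ℝ, 0 ≤ s → s ≤ t → t ≤ T →
            ‖(𝒜 t - 𝒜 s) - A s t‖ ≤ c * Cδ * (t - s) ^ β) ∧
          (∀ s t : ℝ, 0 ≤ s → s ≤ t → t ≤ T →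
            ‖𝒜 t - 𝒜 s‖ ≤ (Cα + c * Cδ * T ^ (β - α)) * (t - s) ^ α) := by
  classical
  have hr0 : (0:ℝ) < (2:ℝ) ^ (1 - β) := Real.rpow_pos_of_pos two_pos _
  have hr1 : (2:ℝ) ^ (1 - β) < 1 :=
    Real.rpow_lt_one_of_one_lt_of_neg one_lt_two (by linarith)
  set r : ℝ := (2:ℝ) ^ (1 - β) with hrdef
  have h1r : 0 < 1 - r := by linarith
  refine ⟨2 + 1 / (1 - r), by positivity, ?_⟩
  intro E _ _ _ T α hT hα hα1 A Cα Cδ hdiag hCα' hδ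
  haveI : Nonempty E := ⟨0⟩
  have hTβ : (0:ℝ) < T ^ β := Real.rpow_pos_of_pos hT β
  have hCδ : 0 ≤ Cδ := by
    have h0 := hδ 0 0 T le_rfl le_rfl hT.le le_rfl
    have hA00 : A 0 0 = 0 := hdiag 0 ⟨le_rfl, hT.le⟩
    rw [hA00] at h0
    have h1 : A 0 T - 0 - A 0 T = 0 := by abel
    rw [h1, norm_zero, sub_zero] at h0
    nlinarith [hTβ]
  have hgeom : ∀ (γ : ℝ) (n : ℕ), (T / 2 ^ n) ^ γ = T ^ γ * ((2:ℝ) ^ (-γ)) ^ n :=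
    fun γ n => Sewing.div_pow_rpow hT γ n
  have hdist : ∀ s t : ℝ, 0 ≤ s → s ≤ t → t ≤ T → ∀ n : ℕ,
      dist (Sewing.S A T s t n) (Sewing.S A T s t (n + 1))
        ≤ (Cδ * (t - s) * T ^ (β - 1)) * r ^ n := by
    intro s t hs hst htT n
    rw [dist_eq_norm, norm_sub_rev]
    have h1 := Sewing.norm_S_succ_sub A hβ hT hCδ hs hst htT hδ n
    rw [hgeom (β - 1) n, neg_sub] at h1
    calc ‖Sewing.S A T s t (n + 1) - Sewing.S A T s t n‖
        ≤ Cδ * (T ^ (β - 1) * ((2:ℝ) ^ (1 - β)) ^ n) * (t - s) := h1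
      _ = (Cδ * (t - s) * T ^ (β - 1)) * r ^ n := by rw [hrdef]; ring
  have hcauchy : ∀ s t : ℝ, 0 ≤ s → s ≤ t → t ≤ T → CauchySeq (Sewing.S A T s t) :=
    fun s t hs hst htT =>
      cauchySeq_of_le_geometric r _ hr1 (hdist s t hs hst htT)
  set L : ℝ → ℝ → E := fun s t => limUnder atTop (Sewing.S A T s t) with hLdef
  have hLtend : ∀ s t : ℝ, 0 ≤ s → s ≤ t → t ≤ T →
      Tendsto (Sewing.S A T s t) atTop (𝓝 (L s t)) :=
    fun s t hs hst htT => (hcauchy s t hs hst htT).tendsto_limUnder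
  have hLdist : ∀ s t : ℝ, 0 ≤ s → s ≤ t → t ≤ T → ∀ n : ℕ,
      dist (Sewing.S A T s t n) (L s t)
        ≤ (Cδ * (t - s) * T ^ (β - 1)) * r ^ n / (1 - r) :=
    fun s t hs hst htT n =>
      dist_le_of_le_geometric_of_tendsto r _ hr1 (hdist s t hs hst htT)
        (hLtend s t hs hst htT) n
  have hLself : ∀ s : ℝ, 0 ≤ s → s ≤ T → L s s = 0 := by
    intro s hs hsT
    have h0 : ∀ n, Sewing.S A T s s n = 0 := Sewing.S_self A T s (hdiag s ⟨hs, hsT⟩)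
    have h1 := hLtend s s hs le_rfl hsT
    rw [show (Sewing.S A T s s) = fun _ => (0:E) from funext h0] at h1
    exact tendsto_nhds_unique h1 tendsto_const_nhds
  have hadd : ∀ s t : ℝ, 0 ≤ s → s ≤ t → t ≤ T → L 0 t - L 0 s = L s t := by
    intro s t hs hst htT
    have h0t := hLtend 0 t le_rfl (hs.trans hst) htT
    have h0s := hLtend 0 s le_rfl hs (hst.trans htT)
    have hstt := hLtend s t hs hst htT
    have h1 : Tendsto (fun n => Sewing.S A T 0 t n - Sewing.S A T 0 s n - Sewing.S A T s t n)
        atTop (𝓝 (L 0 t - L 0 s - L s t)) := (h0t.sub h0s).sub hstt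
    have h2 : Tendsto (fun n => Sewing.S A T 0 t n - Sewing.S A T 0 s n - Sewing.S A T s t n)
        atTop (𝓝 0) := by
      have htend : Tendsto (fun n : ℕ => (Cδ * T ^ β) * r ^ n) atTop (𝓝 0) := by
        simpa using (tendsto_pow_atTop_nhds_zero_of_lt_one hr0.le hr1).const_mul (Cδ * T ^ β)
      refine squeeze_zero_norm (fun n => ?_) htend
      ·
        have h3 := Sewing.norm_S_cross A hβ hT hCδ hs hst htT hdiag hδ n
        have h5 : (2:ℝ) ^ (1 - β) = 2 * (2:ℝ) ^ (-β) := by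
          rw [show (1:ℝ) - β = 1 + (-β) by ring, Real.rpow_add two_pos, Real.rpow_one]
        have h4 : (2 ^ n : ℝ) * (Cδ * (T / 2 ^ n) ^ β) = (Cδ * T ^ β) * r ^ n := by
          rw [hgeom β n, hrdef, h5, mul_pow]
          ring
        rw [← h4]
        exact h3
    have h6 := tendsto_nhds_unique h1 h2
    exact sub_eq_zero.mp h6
  have hkey : ∀ s t : ℝ, 0 ≤ s → s ≤ t → t ≤ T →
      ‖L s t - A s t‖ ≤ (2 + 1 / (1 - r)) * Cδ * (t - s) ^ β := by
    intro s t hs hst htT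
    rcases eq_or_lt_of_le hst with rfl | hlt
    · rw [hLself s hs htT, hdiag s ⟨hs, htT⟩]
      simp [Real.zero_rpow (show β ≠ 0 by linarith)]
    · have hexists : ∃ m : ℕ, T / 2 ^ m ≤ t - s := by
        obtain ⟨m, hm⟩ := exists_pow_lt_of_lt_one (div_pos (show (0:ℝ) < t - s by linarith) hT)
          (show (1:ℝ)/2 < 1 by norm_num)
        refine ⟨m, ?_⟩
        have hpm : ((1:ℝ)/2) ^ m = 1 / 2 ^ m := by rw [div_pow, one_pow]
        rw [hpm] at hm
        have h2m : (0:ℝ) < 2 ^ m := by positivity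
        have := (div_lt_div_iff₀ h2m hT).mp hm
        rw [div_le_iff₀ h2m]
        nlinarith
      set m := Nat.find hexists with hmdef
      have hm1 : T / 2 ^ m ≤ t - s := Nat.find_spec hexists
      have hm2 : t - s < 2 * (T / 2 ^ m) := by
        rcases Nat.eq_zero_or_pos m with h0 | hpos
        · rw [h0]
          norm_num
          have : t - s ≤ T := by linarith
          linarith
        · obtain ⟨k, hk⟩ := Nat.exists_eq_succ_of_ne_zero (Nat.pos_iff_ne_zero.mp hpos)
          have hmin : ¬ (T / 2 ^ k ≤ t - s) := Nat.find_min hexists (by omega)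
          push_neg at hmin
          have heq : T / 2 ^ k = 2 * (T / 2 ^ m) := by
            rw [hk]
            field_simp
            exact pow_succ _ _
          linarith
      have hb1 := hLdist s t hs hst htT m
      have hb2 := Sewing.norm_S_sub_A A hβ hT hCδ hs hst htT hdiag hδ m hm2
      have e1 : (Cδ * (t - s) * T ^ (β - 1)) * r ^ m
          = Cδ * (t - s) * (T / 2 ^ m) ^ (β - 1) := by
        rw [hgeom (β - 1) m, neg_sub, hrdef]
        ring
      have e2 : (T / 2 ^ m) ^ (β - 1) ≤ (t - s) ^ (β - 1) :=
        Real.rpow_le_rpow (by positivity) hm1 (by linarith)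
      have e3 : (t - s) * (t - s) ^ (β - 1) = (t - s) ^ β := by
        conv_rhs => rw [show β = 1 + (β - 1) by ring]
        rw [Real.rpow_add (by linarith : (0:ℝ) < t - s), Real.rpow_one]
      have hnorm1 : ‖L s t - Sewing.S A T s t m‖ ≤ Cδ * (t - s) ^ β / (1 - r) := by
        calc ‖L s t - Sewing.S A T s t m‖ = dist (Sewing.S A T s t m) (L s t) := by
              rw [dist_eq_norm, norm_sub_rev]
          _ ≤ (Cδ * (t - s) * T ^ (β - 1)) * r ^ m / (1 - r) := hb1
          _ = Cδ * (t - s) * (T / 2 ^ m) ^ (β - 1) / (1 - r) := by rw [e1]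
          _ ≤ Cδ * (t - s) * (t - s) ^ (β - 1) / (1 - r) := by
              have hnn : 0 ≤ Cδ * (t - s) := mul_nonneg hCδ (by linarith)
              exact (div_le_div_iff_of_pos_right h1r).mpr (mul_le_mul_of_nonneg_left e2 hnn)
          _ = Cδ * (t - s) ^ β / (1 - r) := by rw [mul_assoc, e3]
      calc ‖L s t - A s t‖
          ≤ ‖L s t - Sewing.S A T s t m‖ + ‖Sewing.S A T s t m - A s t‖ := by
            have h7 : L s t - A s t
                = (L s t - Sewing.S A T s t m) + (Sewing.S A T s t m - A s t) := by abel
            rw [h7]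
            exact norm_add_le _ _
        _ ≤ Cδ * (t - s) ^ β / (1 - r) + 2 * Cδ * (t - s) ^ β := add_le_add hnorm1 hb2
        _ = (2 + 1 / (1 - r)) * Cδ * (t - s) ^ β := by field_simp; ring
  refine ⟨fun t => L 0 t, hLself 0 le_rfl hT.le, ?_, ?_⟩
  · intro s t hs hst htT
    rw [hadd s t hs hst htT]
    exact hkey s t hs hst htT
  · intro s t hs hst htT
    have h1 : ‖L 0 t - L 0 s‖ ≤ Cα * (t - s) ^ α + (2 + 1 / (1 - r)) * Cδ * (t - s) ^ β := by
      rw [hadd s t hs hst htT]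
      have h7 : L s t = A s t + (L s t - A s t) := by abel
      calc ‖L s t‖ ≤ ‖A s t‖ + ‖L s t - A s t‖ := by
            rw [h7]; exact (norm_add_le _ _).trans_eq (by rw [← h7])
        _ ≤ _ := add_le_add (hCα' s t hs hst htT) (hkey s t hs hst htT)
    rcases eq_or_lt_of_le hst with rfl | hlt
    · simp [Real.zero_rpow (show α ≠ 0 by linarith)]
    · have e4 : (t - s) ^ β = (t - s) ^ (β - α) * (t - s) ^ α := by
        conv_lhs => rw [show β = (β - α) + α by ring]
        rw [Real.rpow_add (by linarith : (0:ℝ) < t - s)]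
      have e5 : (t - s) ^ (β - α) ≤ T ^ (β - α) :=
        Real.rpow_le_rpow (by linarith) (by linarith) (by linarith)
      have hc0 : (0:ℝ) ≤ 2 + 1 / (1 - r) := by positivity
      have h2 : (2 + 1 / (1 - r)) * Cδ * (t - s) ^ β
          ≤ (2 + 1 / (1 - r)) * Cδ * T ^ (β - α) * (t - s) ^ α := by
        rw [e4]
        have hnn2 : (0:ℝ) ≤ (2 + 1 / (1 - r)) * Cδ := mul_nonneg hc0 hCδ
        have hnn3 : (0:ℝ) ≤ (t - s) ^ α := Real.rpow_nonneg (by linarith) _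
        calc (2 + 1 / (1 - r)) * Cδ * ((t - s) ^ (β - α) * (t - s) ^ α)
            ≤ (2 + 1 / (1 - r)) * Cδ * (T ^ (β - α) * (t - s) ^ α) := by
              apply mul_le_mul_of_nonneg_left _ hnn2
              exact mul_le_mul_of_nonneg_right e5 hnn3
          _ = _ := by ring
      calc ‖L 0 t - L 0 s‖
          ≤ Cα * (t - s) ^ α + (2 + 1 / (1 - r)) * Cδ * (t - s) ^ β := h1
        _ ≤ Cα * (t - s) ^ α + (2 + 1 / (1 - r)) * Cδ * T ^ (β - α) * (t - s) ^ α := by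
            linarith
        _ = (Cα + (2 + 1 / (1 - r)) * Cδ * T ^ (β - α)) * (t - s) ^ α := by ring
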